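/- For every x ∈ ℝ and t > 0, φ_a(x,t) converges to φ_0(x,t) as a → 0 (with a ≠ 0). -/

import Mathlib

open Real Filter

/-- For `a ≠ 0`, the function `φ_a(x,t) = (π / sinh(aπ)) Σ_{k ∈ ℤ} sin(ax + 2kat) e^{−2(kx + k²t)}`. -/
noncomputable def phi (a x t : ℝ) : ℝ :=
  (Real.pi / Real.sinh (a * Real.pi)) *
    ∑' k : ℤ, Real.sin (a * x + 2 * (k : ℝ) * a * t) * Real.exp (-2 * ((k : ℝ) * x + (k : ℝ) ^ 2 * t))

/-- The function `φ_0(x,t) = Σ_{k ∈ ℤ} (x + 2kt) e^{−2(kx + k²t)}`. -/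
noncomputable def phi0 (x t : ℝ) : ℝ :=
  ∑' k : ℤ, (x + 2 * (k : ℝ) * t) * Real.exp (-2 * ((k : ℝ) * x + (k : ℝ) ^ 2 * t))

/-- `φ_a` for all `a ∈ ℝ`, with `φ_0` as the value at `a = 0`. -/
noncomputable def phiA (a x t : ℝ) : ℝ := if a = 0 then phi0 x t else phi a x t

/-- Summability of the dominating bound. -/
lemma phi_bound_summable (x t : ℝ) (ht : 0 < t) :
    Summable fun k : ℤ =>
      |x + 2 * (k : ℝ) * t| * Real.exp (-2 * ((k : ℝ) * x + (k : ℝ) ^ 2 * t)) := by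
  have h2t : (0 : ℝ) < 2 * t / π := by positivity
  have h0 := summable_pow_mul_jacobiTheta₂_term_bound (|x| / π) h2t 0
  have h1 := summable_pow_mul_jacobiTheta₂_term_bound (|x| / π) h2t 1
  have hsum := (h0.mul_left |x|).add (h1.mul_left (2 * t))
  refine Summable.of_nonneg_of_le (fun k => by positivity) (fun k => ?_) hsum
  have hE : -π * (2 * t / π * (k : ℝ) ^ 2 - 2 * (|x| / π) * |(k : ℝ)|)
      = 2 * |x| * |(k : ℝ)| - 2 * t * (k : ℝ) ^ 2 := by
    field_simp
    ring
  have habs : |x + 2 * (k : ℝ) * t| ≤ |x| + 2 * t * |(k : ℝ)| := by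
    calc |x + 2 * (k : ℝ) * t| ≤ |x| + |2 * (k : ℝ) * t| := abs_add_le _ _
    _ = |x| + 2 * t * |(k : ℝ)| := by
        rw [abs_mul, abs_mul, abs_of_nonneg (by norm_num : (0:ℝ) ≤ 2), abs_of_pos ht]
        ring
  have hexp : Real.exp (-2 * ((k : ℝ) * x + (k : ℝ) ^ 2 * t))
      ≤ Real.exp (2 * |x| * |(k : ℝ)| - 2 * t * (k : ℝ) ^ 2) := by
    apply Real.exp_le_exp.2
    have : -((k : ℝ) * x) ≤ |(k : ℝ)| * |x| := by
      rw [← abs_mul]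
      exact neg_le_abs _
    nlinarith
  calc |x + 2 * (k : ℝ) * t| * Real.exp (-2 * ((k : ℝ) * x + (k : ℝ) ^ 2 * t))
      ≤ (|x| + 2 * t * |(k : ℝ)|) *
        Real.exp (2 * |x| * |(k : ℝ)| - 2 * t * (k : ℝ) ^ 2) := by
        apply mul_le_mul habs hexp (Real.exp_pos _).le (by positivity)
    _ = |x| * ((|(k : ℝ)| : ℝ) ^ 0 *
          Real.exp (-π * (2 * t / π * (k : ℝ) ^ 2 - 2 * (|x| / π) * |(k : ℝ)|)))
        + 2 * t * ((|(k : ℝ)| : ℝ) ^ 1 *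
          Real.exp (-π * (2 * t / π * (k : ℝ) ^ 2 - 2 * (|x| / π) * |(k : ℝ)|))) := by
        rw [hE]
        push_cast
        ring
    _ = _ := by push_cast [Int.cast_abs]; ring_nf

/-- `sin (a*c)/a → c` as `a → 0`, `a ≠ 0`. -/
lemma tendsto_sin_mul_div (c : ℝ) :
    Tendsto (fun a : ℝ => Real.sin (a * c) / a) (nhdsWithin 0 {(0 : ℝ)}ᶜ) (nhds c) := by
  have hd : HasDerivAt (fun a : ℝ => Real.sin (a * c)) c 0 := by
    have := (Real.hasDerivAt_sin ((0 : ℝ) * c)).comp 0 (hasDerivAt_mul_const c)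
    simpa [Function.comp_def] using this
  rw [hasDerivAt_iff_tendsto_slope] at hd
  refine hd.congr' ?_
  filter_upwards [self_mem_nhdsWithin] with a ha
  simp [slope_def_field, ha]

/-- `sinh (a*π)/a → π` as `a → 0`, `a ≠ 0`. -/
lemma tendsto_sinh_mul_div :
    Tendsto (fun a : ℝ => Real.sinh (a * π) / a) (nhdsWithin 0 {(0 : ℝ)}ᶜ) (nhds π) := by
  have hd : HasDerivAt (fun a : ℝ => Real.sinh (a * π)) π 0 := by
    have := (Real.hasDerivAt_sinh ((0 : ℝ) * π)).comp 0 (hasDerivAt_mul_const π)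
    simpa [Function.comp_def] using this
  rw [hasDerivAt_iff_tendsto_slope] at hd
  refine hd.congr' ?_
  filter_upwards [self_mem_nhdsWithin] with a ha
  simp [slope_def_field, ha]

/-- For every `x ∈ ℝ` and `t > 0`, `φ_a(x,t)` converges to `φ_0(x,t)` as `a → 0`, `a ≠ 0`. -/
theorem phi_tendsto_phi0 (x t : ℝ) (ht : 0 < t) :
    Tendsto (fun a : ℝ => phi a x t) (nhdsWithin 0 {(0 : ℝ)}ᶜ) (nhds (phi0 x t)) := by
  set e : ℤ → ℝ := fun k => Real.exp (-2 * ((k : ℝ) * x + (k : ℝ) ^ 2 * t)) with he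
  -- The rescaled inner sum tends to `phi0 x t`.
  have hS : Tendsto (fun a : ℝ =>
      ∑' k : ℤ, Real.sin (a * x + 2 * (k : ℝ) * a * t) * e k / a)
      (nhdsWithin 0 {(0 : ℝ)}ᶜ) (nhds (phi0 x t)) := by
    rw [phi0]
    apply tendsto_tsum_of_dominated_convergence (phi_bound_summable x t ht)
    · intro k
      have h1 : Tendsto (fun a : ℝ => Real.sin (a * (x + 2 * (k : ℝ) * t)) / a * e k)
          (nhdsWithin 0 {(0 : ℝ)}ᶜ) (nhds ((x + 2 * (k : ℝ) * t) * e k)) :=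
        (tendsto_sin_mul_div _).mul_const _
      refine h1.congr (fun a => ?_)
      rw [mul_div_right_comm]
      ring_nf
    · filter_upwards [self_mem_nhdsWithin] with a ha k
      have ha' : a ≠ 0 := ha
      have h1 : a * x + 2 * (k : ℝ) * a * t = a * (x + 2 * (k : ℝ) * t) := by ring
      rw [Real.norm_eq_abs, abs_div, abs_mul, h1]
      rw [div_le_iff₀ (abs_pos.2 ha')]
      calc |Real.sin (a * (x + 2 * (k : ℝ) * t))| * |e k|
          ≤ |a * (x + 2 * (k : ℝ) * t)| * |e k| :=
            mul_le_mul_of_nonneg_right (Real.abs_sin_le_abs) (abs_nonneg _)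
        _ = |x + 2 * (k : ℝ) * t| * e k * |a| := by
            rw [abs_mul, abs_of_nonneg (Real.exp_pos _).le]
            ring
  -- The prefactor tends to 1.
  have hP : Tendsto (fun a : ℝ => π / (Real.sinh (a * π) / a))
      (nhdsWithin 0 {(0 : ℝ)}ᶜ) (nhds 1) := by
    have := Tendsto.div (tendsto_const_nhds :
      Tendsto (fun _ : ℝ => π) (nhdsWithin 0 {(0 : ℝ)}ᶜ) (nhds π))
      tendsto_sinh_mul_div Real.pi_ne_zero
    simpa [div_self Real.pi_ne_zero, Pi.div_def] using this
  have := hP.mul hS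
  rw [one_mul] at this
  refine this.congr' ?_
  filter_upwards [self_mem_nhdsWithin] with a ha
  have ha' : a ≠ 0 := ha
  have hs : Real.sinh (a * π) ≠ 0 := by
    rw [Real.sinh_ne_zero]
    exact mul_ne_zero ha' Real.pi_ne_zero
  simp only [he]
  rw [phi, tsum_div_const, div_div_eq_mul_div, div_mul_div_comm, mul_right_comm,
    mul_div_mul_right _ _ ha', div_mul_eq_mul_div]
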